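/- Suppose T_R ∈ ℝ^{k×k̂_R} has full column rank with column space V_R, T_{R,ij} = 0 whenever φ(i) ≠ φ̂_R(j) for a map φ̂_R : {1,…,k̂_R} → {1,…,d}, and e^T T_R = ê_R^T where ê_R ∈ ℝ^{k̂_R} is the all-ones vector; suppose T_N ∈ ℝ^{k̂_N×k} has full row rank with ker T_N = V_N, T_{N,ij} = 0 whenever φ̂_N(i) ≠ φ(j) for a map φ̂_N : {1,…,k̂_N} → {1,…,d}, and e^T = ê_N^T T_N where ê_N ∈ ℝ^{k̂_N} is the all-ones vector. Let Q̂_R ∈ ℝ^{k̂_R×k̂_R} be the unique matrix with Q T_R = T_R Q̂_R, and let k̂ = rank(T_N T_R). Then there exist a full-row-rank matrix T ∈ ℝ^{k̂×k̂_R} and a map φ̂ : {1,…,k̂} → {1,…,d} such that: (i) T_{ij} = 0 whenever φ̂(i) ≠ φ̂_R(j); (ii) ker T = ker(T_N T_R); (iii) ê_R^T = ê^T T, where ê ∈ ℝ^{k̂} is the all-ones vector; and (iv) Q̂_R · ker T ⊆ ker T. -/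

import Mathlib

open Matrix

noncomputable def diagInd (k d : ℕ) (φ : Fin k → Fin d) (u : Fin d) :
    Matrix (Fin k) (Fin k) ℝ :=
  Matrix.diagonal fun i => if φ i = u then (1 : ℝ) else 0

noncomputable def chain (k d : ℕ) (Q : Matrix (Fin k) (Fin k) ℝ)
    (φ : Fin k → Fin d) : List (Fin d) → Matrix (Fin k) (Fin k) ℝ
  | [] => 1
  | u :: l => diagInd k d φ u * Q * chain k d Q φ l

noncomputable def reachSpace (k d : ℕ) (Q : Matrix (Fin k) (Fin k) ℝ)
    (φ : Fin k → Fin d) (ρ : Fin k → ℝ) : Submodule ℝ (Fin k → ℝ) :=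
  Submodule.span ℝ { v | ∃ (l : List (Fin d)) (u0 : Fin d),
    v = (chain k d Q φ l * diagInd k d φ u0) *ᵥ ρ }

noncomputable def nullSpace (k d : ℕ) (Q : Matrix (Fin k) (Fin k) ℝ)
    (φ : Fin k → Fin d) : Submodule ℝ (Fin k → ℝ) where
  carrier := { v | ∀ (l : List (Fin d)) (u0 : Fin d),
    (1 : Fin k → ℝ) ⬝ᵥ ((chain k d Q φ l * diagInd k d φ u0) *ᵥ v) = 0 }
  add_mem' := by
    intro a b ha hb l u0
    simp [Matrix.mulVec_add, dotProduct_add, ha l u0, hb l u0]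
  zero_mem' := by intro l u0; simp
  smul_mem' := by
    intro c a ha l u0
    simp [Matrix.mulVec_smul, dotProduct_smul, ha l u0]


section Aux

open Module

/-- Submodule of vectors vanishing on a predicate's support. -/
def zeroOn (n : ℕ) (P : Fin n → Prop) : Submodule ℝ (Fin n → ℝ) where
  carrier := {v | ∀ j, P j → v j = 0}
  add_mem' := by intro a b ha hb j hj; simp [Pi.add_apply, ha j hj, hb j hj]
  zero_mem' := by intro j hj; rfl
  smul_mem' := by intro c v hv j hj; simp [Pi.smul_apply, hv j hj]

lemma zeroOn_mono {n : ℕ} {P P' : Fin n → Prop} (h : ∀ j, P' j → P j) :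
    zeroOn n P ≤ zeroOn n P' := fun v hv j hj => hv j (h j hj)

lemma zeroOn_disjoint {n : ℕ} {P P' : Fin n → Prop} (h : ∀ j, P j ∨ P' j) :
    Disjoint (zeroOn n P) (zeroOn n P') := by
  rw [Submodule.disjoint_def]
  intro v hP hP'
  funext j
  rcases h j with h' | h'
  · exact hP j h'
  · exact hP' j h'

lemma ker_eq_of_span_rows_eq {m m' n : ℕ}
    (A : Matrix (Fin m) (Fin n) ℝ) (B : Matrix (Fin m') (Fin n) ℝ)
    (h : Submodule.span ℝ (Set.range A) = Submodule.span ℝ (Set.range B)) :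
    LinearMap.ker A.mulVecLin = LinearMap.ker B.mulVecLin := by
  have key : ∀ {p : ℕ} (C : Matrix (Fin p) (Fin n) ℝ) (v : Fin n → ℝ),
      C *ᵥ v = 0 ↔ ∀ w ∈ Submodule.span ℝ (Set.range C), w ⬝ᵥ v = 0 := by
    intro p C v
    constructor
    · intro hv w hw
      induction hw using Submodule.span_induction with
      | mem w hw =>
        obtain ⟨i, rfl⟩ := hw
        exact congrFun hv i
      | zero => simp
      | add x y _ _ hx hy => simp [add_dotProduct, hx, hy]
      | smul c x _ hx => simp [smul_dotProduct, hx]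
    · intro hv
      funext i
      exact hv (C i) (Submodule.subset_span ⟨i, rfl⟩)
  ext v
  simp only [LinearMap.mem_ker, Matrix.mulVecLin_apply, key, h]

lemma rank_eq_finrank_span_rows {m n : ℕ} (A : Matrix (Fin m) (Fin n) ℝ) :
    A.rank = Module.finrank ℝ (Submodule.span ℝ (Set.range A)) := by
  rw [← Matrix.rank_transpose, Matrix.rank, Matrix.range_mulVecLin]
  rfl

lemma exists_spanning_sum {n : ℕ} (W : Submodule ℝ (Fin n → ℝ)) (s : Fin n → ℝ)
    (hs : s ∈ W) (hs0 : W ≠ ⊥ → s ≠ 0) :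
    ∃ t : Fin (Module.finrank ℝ W) → (Fin n → ℝ),
      (∀ i, t i ∈ W) ∧ Submodule.span ℝ (Set.range t) = W ∧ ∑ i, t i = s := by
  by_cases hW : W = ⊥
  · have hs' : s = 0 := by simpa [hW] using hs
    have hr : Module.finrank ℝ W = 0 := by rw [hW]; exact finrank_bot ℝ _
    refine ⟨fun _ => 0, fun _ => zero_mem _, ?_, ?_⟩
    · refine le_antisymm (Submodule.span_le.2 ?_) ?_
      · rintro x ⟨i, rfl⟩; exact zero_mem _
      · rw [hW]; exact bot_le
    · have : IsEmpty (Fin (Module.finrank ℝ W)) := by rw [hr]; infer_instance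
      simp [hs']
  · have hsne : s ≠ 0 := hs0 hW
    have : FiniteDimensional ℝ W := inferInstance
    set r := Module.finrank ℝ W with hrdef
    let b : Basis (Fin r) ℝ W := Module.finBasis ℝ W
    set sW : W := ⟨s, hs⟩ with hsWdef
    have hsW : sW ≠ 0 := by
      intro h
      apply hsne
      simpa [hsWdef] using congrArg (Subtype.val) h
    obtain ⟨j, hj⟩ : ∃ j, b.repr sW j ≠ 0 := by
      by_contra h
      push_neg at h
      apply hsW
      have : b.repr sW = 0 := Finsupp.ext h
      have := b.repr.injective (by simpa using this)
      simpa using this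
    classical
    let tW : Fin r → W := fun i =>
      if i = j then sW - ∑ i' ∈ Finset.univ.erase j, b i' else b i
    have htWsum : ∑ i, tW i = sW := by
      rw [← Finset.add_sum_erase _ tW (Finset.mem_univ j)]
      have h1 : tW j = sW - ∑ i' ∈ Finset.univ.erase j, b i' := if_pos rfl
      have h2 : ∑ i ∈ Finset.univ.erase j, tW i = ∑ i ∈ Finset.univ.erase j, b i := by
        apply Finset.sum_congr rfl
        intro i hi
        have : i ≠ j := (Finset.mem_erase.1 hi).1
        simp [tW, this]
      rw [h1, h2]
      abel
    have hspanW : Submodule.span ℝ (Set.range tW) = ⊤ := by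
      have hmem : ∀ i, b i ∈ Submodule.span ℝ (Set.range tW) := by
        have hsmem : sW ∈ Submodule.span ℝ (Set.range tW) := by
          rw [← htWsum]
          exact Submodule.sum_mem _ fun i _ => Submodule.subset_span ⟨i, rfl⟩
        intro i
        by_cases hij : i = j
        · subst hij
          have hrepr : sW = ∑ i', b.repr sW i' • b i' := by
            conv_lhs => rw [← b.sum_repr sW]
          have hsplit : sW = b.repr sW i • b i
              + ∑ i' ∈ Finset.univ.erase i, b.repr sW i' • b i' := by
            conv_lhs => rw [hrepr]
            exact (Finset.add_sum_erase _ (fun i' => b.repr sW i' • b i')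
              (Finset.mem_univ i)).symm
          have h3 : (b.repr sW i) • b i
              = sW - ∑ i' ∈ Finset.univ.erase i, b.repr sW i' • b i' := by
            rw [eq_sub_iff_add_eq]
            exact hsplit.symm
          have h4 : b i = (b.repr sW i)⁻¹ •
              (sW - ∑ i' ∈ Finset.univ.erase i, b.repr sW i' • b i') := by
            rw [← h3, smul_smul, inv_mul_cancel₀ hj, one_smul]
          rw [h4]
          refine Submodule.smul_mem _ _ (Submodule.sub_mem _ hsmem ?_)
          refine Submodule.sum_mem _ fun i' hi' => Submodule.smul_mem _ _ ?_
          have : i' ≠ i := (Finset.mem_erase.1 hi').1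
          have : b i' = tW i' := by simp [tW, this]
          rw [this]
          exact Submodule.subset_span ⟨i', rfl⟩
        · have : b i = tW i := by simp [tW, hij]
          rw [this]
          exact Submodule.subset_span ⟨i, rfl⟩
      refine le_antisymm le_top ?_
      rw [← b.span_eq]
      exact Submodule.span_le.2 fun x ⟨i, hi⟩ => hi ▸ hmem i
    refine ⟨fun i => (tW i : Fin n → ℝ), fun i => (tW i).2, ?_, ?_⟩
    · have : Set.range (fun i => (tW i : Fin n → ℝ)) = W.subtype '' Set.range tW := by
        ext x
        simp [Set.range_comp]
      rw [this, ← Submodule.map_span, hspanW]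
      simp
    · have := congrArg (Subtype.val) htWsum
      simpa using this

lemma sum_diagInd (k d : ℕ) (φ : Fin k → Fin d) :
    ∑ u, diagInd k d φ u = 1 := by
  ext i j
  by_cases h : i = j
  · subst h
    simp [diagInd, Matrix.sum_apply, Matrix.diagonal_apply, Matrix.one_apply]
  · simp [diagInd, Matrix.sum_apply, Matrix.diagonal_apply, Matrix.one_apply, h]

lemma chain_append (k d : ℕ) (Q : Matrix (Fin k) (Fin k) ℝ) (φ : Fin k → Fin d)
    (l : List (Fin d)) (u : Fin d) :
    chain k d Q φ (l ++ [u]) = chain k d Q φ l * (diagInd k d φ u * Q) := by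
  induction l with
  | nil => simp [chain]
  | cons a l ih => simp [chain, ih, mul_assoc]

lemma nullSpace_Q_invariant (k d : ℕ) (Q : Matrix (Fin k) (Fin k) ℝ) (φ : Fin k → Fin d)
    (v : Fin k → ℝ) (hv : v ∈ nullSpace k d Q φ) : Q *ᵥ v ∈ nullSpace k d Q φ := by
  intro l u0
  have hmv : ∀ (A : Fin d → Matrix (Fin k) (Fin k) ℝ) (w : Fin k → ℝ),
      (∑ u, A u) *ᵥ w = ∑ u, A u *ᵥ w := by
    intro A w
    ext i
    simp only [Matrix.mulVec, dotProduct, Matrix.sum_apply, Finset.sum_apply, Finset.sum_mul]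
    rw [Finset.sum_comm]
  have h2 : chain k d Q φ (l ++ [u0])
      = ∑ u, chain k d Q φ (l ++ [u0]) * diagInd k d φ u := by
    rw [← Finset.mul_sum, sum_diagInd, mul_one]
  calc (1 : Fin k → ℝ) ⬝ᵥ ((chain k d Q φ l * diagInd k d φ u0) *ᵥ (Q *ᵥ v))
      = (1 : Fin k → ℝ) ⬝ᵥ (chain k d Q φ (l ++ [u0]) *ᵥ v) := by
        rw [Matrix.mulVec_mulVec, chain_append, mul_assoc]
    _ = ∑ u, (1 : Fin k → ℝ) ⬝ᵥ ((chain k d Q φ (l ++ [u0]) * diagInd k d φ u) *ᵥ v) := by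
        conv_lhs => rw [h2]
        rw [hmv]
        simp [dotProduct, Finset.sum_apply]
        rw [Finset.sum_comm]
    _ = 0 := by
        refine Finset.sum_eq_zero fun u _ => ?_
        exact hv (l ++ [u0]) u

end Aux
/-- Proposition 4, basis of the effective space: given structured full-rank
matrices `T_R` (columns spanning `V_R`) and `T_N` (kernel `V_N`) as in Propositions 2–3, and
`Q̂_R` with `Q T_R = T_R Q̂_R`, with `k̂ = rank (T_N T_R)` there exist a full-row-rank
`T ∈ ℝ^{k̂×k̂_R}` and `φ̂` such that `T i j = 0` whenever `φ̂ i ≠ φ̂_R j`,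
`ker T = ker (T_N T_R)`, `ê_Rᵀ = êᵀ T`, and `ker T` is `Q̂_R`-invariant. -/
theorem exists_basis_effective_space
    (k d kR kN : ℕ) (hk : 0 < k) (hd : 0 < d) (φ : Fin k → Fin d)
    (Q : Matrix (Fin k) (Fin k) ℝ)
    (hQ : (1 : Fin k → ℝ) ᵥ* Q = 1)
    (ρ : Fin k → ℝ) (hρ : Q *ᵥ ρ = ρ)
    (TR : Matrix (Fin k) (Fin kR) ℝ) (φR : Fin kR → Fin d)
    (hRrank : TR.rank = kR)
    (hRrange : LinearMap.range TR.mulVecLin = reachSpace k d Q φ ρ)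
    (hRpattern : ∀ (i : Fin k) (j : Fin kR), φ i ≠ φR j → TR i j = 0)
    (hRsum : (1 : Fin k → ℝ) ᵥ* TR = 1)
    (TN : Matrix (Fin kN) (Fin k) ℝ) (φN : Fin kN → Fin d)
    (hNrank : TN.rank = kN)
    (hNker : LinearMap.ker TN.mulVecLin = nullSpace k d Q φ)
    (hNpattern : ∀ (i : Fin kN) (j : Fin k), φN i ≠ φ j → TN i j = 0)
    (hNsum : (1 : Fin kN → ℝ) ᵥ* TN = (1 : Fin k → ℝ))
    (QR : Matrix (Fin kR) (Fin kR) ℝ)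
    (hQR : Q * TR = TR * QR)
    (khat : ℕ) (hkhat : khat = (TN * TR).rank) :
    ∃ (T : Matrix (Fin khat) (Fin kR) ℝ) (φhat : Fin khat → Fin d),
      T.rank = khat ∧
      (∀ (i : Fin khat) (j : Fin kR), φhat i ≠ φR j → T i j = 0) ∧
      LinearMap.ker T.mulVecLin = LinearMap.ker (TN * TR).mulVecLin ∧
      (1 : Fin khat → ℝ) ᵥ* T = (1 : Fin kR → ℝ) ∧
      (∀ v : Fin kR → ℝ, T *ᵥ v = 0 → T *ᵥ (QR *ᵥ v) = 0) := by
  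
  classical
  set M : Matrix (Fin kN) (Fin kR) ℝ := TN * TR with hM
  -- pattern of M
  have hMpat : ∀ (i : Fin kN) (j : Fin kR), φN i ≠ φR j → M i j = 0 := by
    intro i j hij
    show ∑ l, TN i l * TR l j = 0
    refine Finset.sum_eq_zero fun l _ => ?_
    by_cases h : φN i = φ l
    · have h' : φ l ≠ φR j := by rw [← h]; exact hij
      rw [hRpattern l j h', mul_zero]
    · rw [hNpattern i l h, zero_mul]
  -- column sums of M
  have hMsum : (1 : Fin kN → ℝ) ᵥ* M = 1 := by
    rw [hM, ← Matrix.vecMul_vecMul, hNsum, hRsum]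
  have hMcol : ∀ j : Fin kR, ∑ i, M i j = 1 := by
    intro j
    have := congrFun hMsum j
    simpa [Matrix.vecMul, dotProduct] using this
  -- kernel invariance for M
  have hMinv : ∀ v : Fin kR → ℝ, M *ᵥ v = 0 → M *ᵥ (QR *ᵥ v) = 0 := by
    intro v hv
    have h1 : TN *ᵥ (TR *ᵥ v) = 0 := by rw [Matrix.mulVec_mulVec]; exact hv
    have h2 : TR *ᵥ v ∈ nullSpace k d Q φ := by
      rw [← hNker]
      exact h1
    have h3 : Q *ᵥ (TR *ᵥ v) ∈ nullSpace k d Q φ := nullSpace_Q_invariant k d Q φ _ h2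
    have h4 : TN *ᵥ (Q *ᵥ (TR *ᵥ v)) = 0 := by
      have hmem : Q *ᵥ (TR *ᵥ v) ∈ LinearMap.ker TN.mulVecLin := by
        rw [hNker]; exact h3
      exact hmem
    have h5 : Q *ᵥ (TR *ᵥ v) = TR *ᵥ (QR *ᵥ v) := by
      rw [Matrix.mulVec_mulVec, Matrix.mulVec_mulVec, hQR]
    rw [hM, ← Matrix.mulVec_mulVec, ← h5]
    exact h4
  -- the groups
  set Wgp : Fin d → Submodule ℝ (Fin kR → ℝ) :=
    fun u => Submodule.span ℝ (M '' {i | φN i = u}) with hWgp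
  have hWC : ∀ u, Wgp u ≤ zeroOn kR (fun j => φR j ≠ u) := by
    intro u
    rw [hWgp]
    refine Submodule.span_le.2 ?_
    rintro x ⟨i, hi, rfl⟩
    intro j hj
    exact hMpat i j (fun hc => hj (by rw [← hc, hi]))
  -- group sums
  set s : Fin d → (Fin kR → ℝ) :=
    fun u => ∑ i ∈ Finset.univ.filter (fun i => φN i = u), M i with hsdef
  have hsval : ∀ u j, s u j = if φR j = u then (1 : ℝ) else 0 := by
    intro u j
    rw [hsdef]
    refine (Finset.sum_apply (g := fun i => M i) _ _).trans ?_
    beta_reduce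
    by_cases h : φR j = u
    · rw [if_pos h]
      rw [Finset.sum_filter_of_ne]
      · exact hMcol j
      · intro i _ hMij
        by_contra hne
        exact hMij (hMpat i j (by rw [h]; exact hne))
    · rw [if_neg h]
      refine Finset.sum_eq_zero fun i hi => ?_
      have hiu : φN i = u := (Finset.mem_filter.1 hi).2
      exact hMpat i j (by rw [hiu]; exact fun hc => h hc.symm)
  have hsmem : ∀ u, s u ∈ Wgp u := by
    intro u
    rw [hsdef, hWgp]
    refine Submodule.sum_mem _ fun i hi => ?_
    exact Submodule.subset_span ⟨i, (Finset.mem_filter.1 hi).2, rfl⟩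
  have hs0 : ∀ u, Wgp u ≠ ⊥ → s u ≠ 0 := by
    intro u hne
    have : ∃ i, φN i = u ∧ M i ≠ 0 := by
      by_contra hc
      push_neg at hc
      apply hne
      rw [hWgp]
      refine le_antisymm (Submodule.span_le.2 ?_) bot_le
      rintro x ⟨i, hi, rfl⟩
      simpa using hc i hi
    obtain ⟨i, hiu, hMi⟩ := this
    obtain ⟨j, hj⟩ : ∃ j, M i j ≠ 0 := by
      by_contra hc
      push_neg at hc
      exact hMi (funext hc)
    have hφj : φR j = u := by
      by_contra hc
      exact hj (hMpat i j (by rw [hiu]; exact fun h => hc h.symm))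
    intro hzero
    have := congrFun hzero j
    rw [hsval u j, if_pos hφj] at this
    simpa using this
  -- disjointness and rank additivity
  have hrank_sum : ∀ t : Finset (Fin d),
      Module.finrank ℝ (t.sup Wgp : Submodule ℝ (Fin kR → ℝ))
        = ∑ u ∈ t, Module.finrank ℝ (Wgp u) := by
    intro t
    induction t using Finset.cons_induction with
    | empty => simp
    | cons a t ha ih =>
      rw [Finset.sup_cons, Finset.sum_cons, ← ih]
      have hdisj : Disjoint (Wgp a) (t.sup Wgp) := by
        have hzd : Disjoint (zeroOn kR (fun j => φR j ≠ a)) (zeroOn kR (fun j => φR j = a)) :=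
          zeroOn_disjoint (fun j => (em (φR j = a)).symm)
        have hle : t.sup Wgp ≤ zeroOn kR (fun j => φR j = a) := by
          refine Finset.sup_le fun u hu => (hWC u).trans (zeroOn_mono ?_)
          intro j hj
          rw [hj]
          exact fun h => ha (by rw [h]; exact hu)
        exact hzd.mono (hWC a) hle
      have hkey := Submodule.finrank_sup_add_finrank_inf_eq (Wgp a) (t.sup Wgp)
      rw [disjoint_iff.1 hdisj] at hkey
      simpa using hkey
  -- row space of M
  have hrows : Submodule.span ℝ (Set.range M) = Finset.univ.sup Wgp := by
    apply le_antisymm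
    · refine Submodule.span_le.2 ?_
      rintro x ⟨i, rfl⟩
      exact Finset.le_sup (f := Wgp) (Finset.mem_univ (φN i))
        (Submodule.subset_span ⟨i, rfl, rfl⟩)
    · refine Finset.sup_le fun u _ => ?_
      rw [hWgp]
      refine Submodule.span_le.2 ?_
      rintro x ⟨i, _, rfl⟩
      exact Submodule.subset_span ⟨i, rfl⟩
  -- khat = sum of group ranks
  have hkhat' : khat = ∑ u, Module.finrank ℝ (Wgp u) := by
    rw [hkhat, rank_eq_finrank_span_rows, hrows, hrank_sum]
  -- choose spanning families
  choose t ht1 ht2 ht3 using fun u => exists_spanning_sum (Wgp u) (s u) (hsmem u) (hs0 u)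
  -- reindex
  have hcard : Fintype.card (Fin khat)
      = Fintype.card (Σ u : Fin d, Fin (Module.finrank ℝ (Wgp u))) := by
    simp [hkhat']
  let e : Fin khat ≃ (Σ u : Fin d, Fin (Module.finrank ℝ (Wgp u))) :=
    Fintype.equivOfCardEq hcard
  set T : Matrix (Fin khat) (Fin kR) ℝ := Matrix.of (fun i j => t (e i).1 (e i).2 j) with hT
  have hTrow : ∀ i, T i = t (e i).1 (e i).2 := fun i => rfl
  have hTsymm : ∀ (u) (i' : Fin (Module.finrank ℝ (Wgp u))), T (e.symm ⟨u, i'⟩) = t u i' := by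
    intro u i'
    rw [hTrow]
    rw [Equiv.apply_symm_apply]
  have hTspan : Submodule.span ℝ (Set.range T) = Finset.univ.sup Wgp := by
    apply le_antisymm
    · refine Submodule.span_le.2 ?_
      rintro x ⟨i, rfl⟩
      rw [hTrow]
      exact Finset.le_sup (f := Wgp) (Finset.mem_univ (e i).1) (ht1 _ _)
    · refine Finset.sup_le fun u _ => ?_
      rw [← ht2 u]
      refine Submodule.span_le.2 ?_
      rintro x ⟨i', rfl⟩
      exact Submodule.subset_span ⟨e.symm ⟨u, i'⟩, hTsymm u i'⟩
  have hker := ker_eq_of_span_rows_eq T M (hTspan.trans hrows.symm)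
  refine ⟨T, fun i => (e i).1, ?_, ?_, ?_, ?_, ?_⟩
  · -- rank
    have h1 : T.rank = M.rank := by
      rw [rank_eq_finrank_span_rows, hTspan, ← hrows, ← rank_eq_finrank_span_rows]
    exact h1.trans hkhat.symm
  · -- pattern
    intro i j hij
    rw [hTrow]
    exact hWC (e i).1 (ht1 _ _) j (fun h => hij h.symm)
  · -- kernel
    exact hker
  · -- sums
    funext j
    have h1 : ((1 : Fin khat → ℝ) ᵥ* T) j = ∑ i, T i j := by
      simp [Matrix.vecMul, dotProduct]
    rw [h1]
    have h2 : ∑ i, T i j = ∑ p : (Σ u : Fin d, Fin (Module.finrank ℝ (Wgp u))), t p.1 p.2 j :=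
      Fintype.sum_equiv e _ _ (fun i => rfl)
    rw [h2, ← Finset.univ_sigma_univ, Finset.sum_sigma]
    have h3 : ∀ u, ∑ i', t u i' j = s u j := by
      intro u
      have := congrFun (ht3 u) j
      simpa using this
    rw [Finset.sum_congr rfl (fun u _ => h3 u)]
    have h4 : ∑ u, s u j = ∑ u, if φR j = u then (1 : ℝ) else 0 :=
      Finset.sum_congr rfl (fun u _ => hsval u j)
    rw [h4]
    simp
  · -- invariance
    intro v hv
    have hvT : v ∈ LinearMap.ker T.mulVecLin := by
      rw [LinearMap.mem_ker, Matrix.mulVecLin_apply]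
      exact hv
    have hvM : M *ᵥ v = 0 := by
      rw [hker, LinearMap.mem_ker, Matrix.mulVecLin_apply] at hvT
      exact hvT
    have h5 := hMinv v hvM
    have h6 : QR *ᵥ v ∈ LinearMap.ker M.mulVecLin := by
      rw [LinearMap.mem_ker, Matrix.mulVecLin_apply]
      exact h5
    rw [← hker, LinearMap.mem_ker, Matrix.mulVecLin_apply] at h6
    exact h6
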